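/- Let (G,T) be a graft, let X ⊆ V(G) be an extreme set, let (Ĝ, T̂) be the rootlization of (G,T) by the mount X, the root r, and the attachment s, let F be a minimum join of (G,T), and let F̂ = F ∪ {rs}. Then: no circuit of Ĝ contains the edge rs, and no circuit of Ĝ with negative F̂-weight contains an edge joining s to a vertex of X. -/

import Mathlib

open scoped Classical

variable {V : Type*}

/-- The `F`-weight of a walk: number of edges outside `F` minus number of edges in `F`. -/
noncomputable def walkWeight {G : SimpleGraph V} (F : Set (Sym2 V)) {x y : V}
    (p : G.Walk x y) : ℤ :=
  ((p.edges.filter fun e => e ∉ F).length : ℤ) -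
    ((p.edges.filter fun e => e ∈ F).length : ℤ)

/-- The `F`-distance between `x` and `y`: the minimum `F`-weight of a path between them. -/
noncomputable def distF (G : SimpleGraph V) (F : Set (Sym2 V)) (x y : V) : ℤ :=
  sInf {w : ℤ | ∃ p : G.Walk x y, p.IsPath ∧ walkWeight F p = w}

/-- `F` is a join of the graft `(G, T)`. -/
def IsJoin (G : SimpleGraph V) (T : Set V) (F : Set (Sym2 V)) : Prop :=
  F ⊆ G.edgeSet ∧ ∀ v : V, v ∈ T ↔ Odd {e ∈ F | v ∈ e}.ncard

/-- `F` is a minimum join of the graft `(G, T)`. -/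
def IsMinJoin (G : SimpleGraph V) (T : Set V) (F : Set (Sym2 V)) : Prop :=
  IsJoin G T F ∧ ∀ F' : Set (Sym2 V), IsJoin G T F' → F.ncard ≤ F'.ncard

/-- `(G, T)` is a graft: every connected component contains an even number of vertices of `T`. -/
def IsGraft (G : SimpleGraph V) (T : Set V) : Prop :=
  ∀ v : V, Even {u | u ∈ T ∧ G.Reachable v u}.ncard

/-- `X` is an extreme set: `d_F(x, y) ≥ 0` for all `x, y ∈ X`. -/
def IsExtremeSet (G : SimpleGraph V) (F : Set (Sym2 V)) (X : Set V) : Prop :=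
  ∀ x ∈ X, ∀ y ∈ X, 0 ≤ distF G F x y

/-- `G` is bipartite with vertex set `Vset` and color classes `A`, `B`. -/
def IsBipartitionOn (G : SimpleGraph V) (Vset A B : Set V) : Prop :=
  A ∪ B = Vset ∧ Disjoint A B ∧
    ∀ v w : V, G.Adj v w → (v ∈ A ∧ w ∈ B) ∨ (v ∈ B ∧ w ∈ A)

/-- `X` is a maximal bipartitic extreme set with respect to color classes `A`, `B`. -/
def MaxBipExtreme (G : SimpleGraph V) (F : Set (Sym2 V)) (A B X : Set V) : Prop :=
  IsExtremeSet G F X ∧ (X ⊆ A ∨ X ⊆ B) ∧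
    ∀ X' : Set V, IsExtremeSet G F X' → (X' ⊆ A ∨ X' ⊆ B) → X ⊆ X' → X' = X

/-- `D_X`: the vertices of `Vset ∖ X` at negative `F`-distance from `X`. -/
def Dset (G : SimpleGraph V) (F : Set (Sym2 V)) (Vset X : Set V) : Set V :=
  {y | y ∈ Vset ∧ y ∉ X ∧ ∃ x ∈ X, distF G F x y < 0}

/-- `C_X = Vset ∖ X ∖ D_X`. -/
def Cset (G : SimpleGraph V) (F : Set (Sym2 V)) (Vset X : Set V) : Set V :=
  (Vset \ X) \ Dset G F Vset X

/-- `min_{x ∈ X} d_F(x, y)`. -/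
noncomputable def minDistX (G : SimpleGraph V) (F : Set (Sym2 V)) (X : Set V) (y : V) : ℤ :=
  sInf {d : ℤ | ∃ x ∈ X, distF G F x y = d}

/-- The graph `G − S` obtained by deleting the vertices of `S`. -/
def gDelete (G : SimpleGraph V) (S : Set V) : SimpleGraph V where
  Adj v w := G.Adj v w ∧ v ∉ S ∧ w ∉ S
  symm := ⟨fun v w ⟨h, hv, hw⟩ => ⟨h.symm, hw, hv⟩⟩
  loopless := ⟨fun v h => h.1.ne rfl⟩

/-- The subgraph of `G` induced by `S`. -/
def gRestrict (G : SimpleGraph V) (S : Set V) : SimpleGraph V where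
  Adj v w := G.Adj v w ∧ v ∈ S ∧ w ∈ S
  symm := ⟨fun v w ⟨h, hv, hw⟩ => ⟨h.symm, hw, hv⟩⟩
  loopless := ⟨fun v h => h.1.ne rfl⟩

/-- `C` is (the vertex set of) a connected component of `G − X`. -/
def IsCompOf (G : SimpleGraph V) (X C : Set V) : Prop :=
  ∃ v, v ∉ X ∧ C = {u | (gDelete G X).Reachable v u}

/-- `δ_G(C)`: the edges of `G` with exactly one end in `C`. -/
def edgeBoundary (G : SimpleGraph V) (C : Set V) : Set (Sym2 V) :=
  {e | e ∈ G.edgeSet ∧ ∃ u v : V, e = s(u, v) ∧ u ∈ C ∧ v ∉ C}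

/-- `X` is an `F`-combic set of the graft `(G, T)`. -/
def IsCombic (G : SimpleGraph V) (T : Set V) (F : Set (Sym2 V)) (X : Set V) : Prop :=
  (∀ u v : V, s(u, v) ∈ F → ¬(u ∈ X ∧ v ∈ X)) ∧
  (∀ C : Set V, IsCompOf G X C → Odd (C ∩ T).ncard →
      (edgeBoundary G C ∩ F).ncard = 1) ∧
  (∀ C : Set V, IsCompOf G X C → Even (C ∩ T).ncard →
      edgeBoundary G C ∩ F = ∅)

/-- The rootlization of `G` by the mount `X`, root `r` and attachment `s`. -/
def rootlize (G : SimpleGraph V) (X : Set V) (r s : V) : SimpleGraph V :=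
  SimpleGraph.fromRel fun v w => G.Adj v w ∨ (v = r ∧ w = s) ∨ (v = s ∧ w ∈ X)

/-- The initial component of `r`: the connected component of `r` in the subgraph
induced by the vertices at nonpositive `F`-distance from `r`. -/
def initComp (G : SimpleGraph V) (F : Set (Sym2 V)) (r : V) : Set V :=
  {x | (gRestrict G {y | distF G F r y ≤ 0}).Reachable r x}

/-- Auxiliary: the weight of a list of edges. -/
noncomputable def lw (F : Set (Sym2 V)) (l : List (Sym2 V)) : ℤ :=
  ((l.filter fun e => e ∉ F).length : ℤ) - ((l.filter fun e => e ∈ F).length : ℤ)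

lemma walkWeight_eq_lw {G : SimpleGraph V} (F : Set (Sym2 V)) {x y : V} (p : G.Walk x y) :
    walkWeight F p = lw F p.edges := rfl

lemma lw_nil (F : Set (Sym2 V)) : lw F ([] : List (Sym2 V)) = 0 := by simp [lw]

lemma lw_cons (F : Set (Sym2 V)) (a : Sym2 V) (l : List (Sym2 V)) :
    lw F (a :: l) = (if a ∈ F then -1 else 1) + lw F l := by
  by_cases h : a ∈ F <;> simp [lw, List.filter_cons, h] <;> push_cast <;> ring

lemma lw_append (F : Set (Sym2 V)) (l₁ l₂ : List (Sym2 V)) :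
    lw F (l₁ ++ l₂) = lw F l₁ + lw F l₂ := by
  simp only [lw, List.filter_append, List.length_append]
  push_cast; ring

lemma lw_perm (F : Set (Sym2 V)) {l₁ l₂ : List (Sym2 V)} (h : l₁.Perm l₂) :
    lw F l₁ = lw F l₂ := by
  simp only [lw, (h.filter _).length_eq]

lemma lw_congr {F F' : Set (Sym2 V)} {l : List (Sym2 V)}
    (h : ∀ e ∈ l, e ∈ F ↔ e ∈ F') : lw F l = lw F' l := by
  unfold lw
  have h1 : (l.filter fun e => e ∉ F) = (l.filter fun e => e ∉ F') :=
    List.filter_congr fun e he => by simp only [decide_eq_decide]; exact not_congr (h e he)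
  have h2 : (l.filter fun e => e ∈ F) = (l.filter fun e => e ∈ F') :=
    List.filter_congr fun e he => by simp only [decide_eq_decide]; exact h e he
  rw [h1, h2]

lemma distF_le_walkWeight [Fintype V] {G : SimpleGraph V} (F : Set (Sym2 V)) {x y : V}
    (p : G.Walk x y) (hp : p.IsPath) : distF G F x y ≤ walkWeight F p := by
  apply csInf_le
  · refine ⟨-(Fintype.card V : ℤ), ?_⟩
    rintro w ⟨q, hq, rfl⟩
    have h1 : ((q.edges.filter fun e => e ∈ F).length : ℤ) ≤ (q.edges.length : ℤ) := by
      exact_mod_cast List.length_filter_le _ _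
    have h2 : (q.edges.length : ℤ) < (Fintype.card V : ℤ) := by
      rw [q.length_edges]; exact_mod_cast hq.length_lt
    have h3 : (0 : ℤ) ≤ ((q.edges.filter fun e => e ∉ F).length : ℤ) := Nat.cast_nonneg _
    unfold walkWeight
    linarith
  · exact ⟨p, hp, rfl⟩

/-- in the rootlization `(Ĝ, T̂)` with `F̂ = F ∪ {rs}` for a minimum join
`F` of `(G, T)`: no circuit of `Ĝ` contains the edge `rs`, and no circuit of `Ĝ` with
negative `F̂`-weight contains an edge joining `s` to a vertex of `X`. -/
theorem stmt_13 [Fintype V] (G : SimpleGraph V) (Vg T X : Set V)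
    (F : Set (Sym2 V)) (r s : V)
    (hGV : ∀ v w : V, G.Adj v w → v ∈ Vg ∧ w ∈ Vg)
    (hT : T ⊆ Vg) (hGT : IsGraft G T)
    (hF : IsMinJoin G T F) (hXV : X ⊆ Vg) (hext : IsExtremeSet G F X)
    (hr : r ∉ Vg) (hs : s ∉ Vg) (hrs : r ≠ s) :
    (∀ (v : V) (Q : (rootlize G X r s).Walk v v), Q.IsCycle → s(r, s) ∉ Q.edges) ∧
    (∀ (v : V) (Q : (rootlize G X r s).Walk v v), Q.IsCycle →
      walkWeight (F ∪ {s(r, s)}) Q < 0 → ∀ x ∈ X, s(s, x) ∉ Q.edges) := by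
  classical
  have hadj_iff : ∀ a b : V, (rootlize G X r s).Adj a b ↔ a ≠ b ∧
      ((G.Adj a b ∨ (a = r ∧ b = s) ∨ (a = s ∧ b ∈ X)) ∨
       (G.Adj b a ∨ (b = r ∧ a = s) ∨ (b = s ∧ a ∈ X))) := by
    intro a b
    simp only [rootlize, SimpleGraph.fromRel_adj]
  -- the only neighbor of r is s
  have hnbr : ∀ w : V, (rootlize G X r s).Adj r w → w = s := by
    intro w hw
    rw [hadj_iff] at hw
    rcases hw.2 with (h | ⟨_, h⟩ | ⟨h, _⟩) | (h | ⟨_, h⟩ | ⟨h, _⟩)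
    · exact absurd (hGV _ _ h).1 hr
    · exact h
    · exact absurd h hrs
    · exact absurd (hGV _ _ h).2 hr
    · exact absurd h hrs
    · exact h
  -- no cycle based at r
  have hnocyc_r : ∀ Q' : (rootlize G X r s).Walk r r, ¬ Q'.IsCycle := by
    intro Q' hQ'
    cases Q' with
    | nil => exact hQ'.ne_nil rfl
    | cons h p =>
      rename_i b
      obtain rfl : s = b := (hnbr b h).symm
      rw [SimpleGraph.Walk.cons_isCycle_iff] at hQ'
      obtain ⟨c, h2, q, hq⟩ := SimpleGraph.Walk.exists_eq_cons_of_ne hrs p.reverse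
      obtain rfl : s = c := (hnbr c h2).symm
      apply hQ'.2
      have hmem : s(r, s) ∈ p.reverse.edges := by
        rw [hq, SimpleGraph.Walk.edges_cons]; exact List.mem_cons_self
      rw [SimpleGraph.Walk.edges_reverse, List.mem_reverse] at hmem
      exact hmem
  -- no cycle visits r
  have hrsupp : ∀ (v : V) (Q : (rootlize G X r s).Walk v v), Q.IsCycle → r ∉ Q.support := by
    intro v Q hQ hmem
    exact hnocyc_r (Q.rotate r hmem) (hQ.rotate hmem)
  have part1 : ∀ (v : V) (Q : (rootlize G X r s).Walk v v), Q.IsCycle → s(r, s) ∉ Q.edges := by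
    intro v Q hQ hedge
    exact hrsupp v Q hQ (Q.fst_mem_support_of_mem_edges hedge)
  refine ⟨part1, ?_⟩
  -- the companion of an s–X edge not in F̂
  have hsX_not : ∀ x' ∈ X, s(s, x') ∉ F ∪ {s(r, s)} := by
    intro x' hx' hmem
    rcases hmem with hmem | hmem
    · have : G.Adj s x' := (SimpleGraph.mem_edgeSet G).mp (hF.1.1 hmem)
      exact hs (hGV _ _ this).1
    · simp only [Set.mem_singleton_iff, Sym2.eq, Sym2.rel_iff', Prod.mk.injEq,
        Prod.swap_prod_mk] at hmem
      rcases hmem with ⟨h1, _⟩ | ⟨_, h2⟩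
      · exact hrs h1.symm
      · exact hr (h2 ▸ hXV hx')
  -- key: every cycle based at s has nonnegative F̂-weight
  have hkey : ∀ Q' : (rootlize G X r s).Walk s s, Q'.IsCycle →
      0 ≤ walkWeight (F ∪ {s(r, s)}) Q' := by
    intro Q' hQ'
    cases Q' with
    | nil => simp [walkWeight]
    | cons h p =>
      rename_i b
      have hQc := hQ'
      rw [SimpleGraph.Walk.cons_isCycle_iff] at hQ'
      obtain ⟨hp_path, hes⟩ := hQ'
      have hrQ : r ∉ (SimpleGraph.Walk.cons h p).support := hrsupp s _ hQc
      have hbr : b ≠ r := by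
        intro hbr
        apply hrQ
        rw [SimpleGraph.Walk.support_cons]
        exact List.mem_cons_of_mem _ (hbr ▸ p.start_mem_support)
      have hXofadj : ∀ b' : V, (rootlize G X r s).Adj s b' → b' ≠ r → b' ∈ X := by
        intro b' hadj hbr'
        rw [hadj_iff] at hadj
        rcases hadj.2 with (h' | ⟨h', _⟩ | ⟨_, h'⟩) | (h' | ⟨h', _⟩ | ⟨h', h''⟩)
        · exact absurd (hGV _ _ h').1 hs
        · exact absurd h' hrs.symm
        · exact h'
        · exact absurd (hGV _ _ h').2 hs
        · exact absurd h' hbr'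
        · exact absurd (hXV h'') hs
      have hbX : b ∈ X := hXofadj b h hbr
      have hsb : s ≠ b := h.ne
      obtain ⟨c, h2, q, hq⟩ := SimpleGraph.Walk.exists_eq_cons_of_ne hsb p.reverse
      have hcr : c ≠ r := by
        intro hcr
        apply hrQ
        rw [SimpleGraph.Walk.support_cons]
        apply List.mem_cons_of_mem
        have : c ∈ p.reverse.support := by
          rw [hq, SimpleGraph.Walk.support_cons]
          exact List.mem_cons_of_mem _ q.start_mem_support
        rw [SimpleGraph.Walk.support_reverse, List.mem_reverse] at this
        exact hcr ▸ this
      have hcX : c ∈ X := hXofadj c h2 hcr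
      have hprev : p.reverse.IsPath := hp_path.reverse
      rw [hq, SimpleGraph.Walk.cons_isPath_iff] at hprev
      obtain ⟨hqpath, hsq⟩ := hprev
      have hrq : r ∉ q.support := by
        intro hrq
        apply hrQ
        rw [SimpleGraph.Walk.support_cons]
        apply List.mem_cons_of_mem
        have : r ∈ p.reverse.support := by
          rw [hq, SimpleGraph.Walk.support_cons]
          exact List.mem_cons_of_mem _ hrq
        rw [SimpleGraph.Walk.support_reverse, List.mem_reverse] at this
        exact this
      -- edges of q are G-edges
      have hsub : ∀ e ∈ q.edges, e ∈ G.edgeSet := by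
        intro e
        induction e using Sym2.ind with
        | _ a b' =>
          intro he
          have hadj := q.adj_of_mem_edges he
          have ha : a ∈ q.support := q.fst_mem_support_of_mem_edges he
          have hb' : b' ∈ q.support := q.snd_mem_support_of_mem_edges he
          have har : a ≠ r := fun h' => hrq (h' ▸ ha)
          have has : a ≠ s := fun h' => hsq (h' ▸ ha)
          have hbr' : b' ≠ r := fun h' => hrq (h' ▸ hb')
          have hbs' : b' ≠ s := fun h' => hsq (h' ▸ hb')
          rw [hadj_iff] at hadj
          rw [SimpleGraph.mem_edgeSet]
          rcases hadj.2 with (h' | ⟨h', _⟩ | ⟨h', _⟩) | (h' | ⟨h', _⟩ | ⟨h', _⟩)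
          · exact h'
          · exact absurd h' har
          · exact absurd h' has
          · exact h'.symm
          · exact absurd h' hbr'
          · exact absurd h' hbs'
      set qG := q.transfer G hsub with hqGdef
      have hqGpath : qG.IsPath := hqpath.transfer hsub
      have hqGedge : qG.edges = q.edges := q.edges_transfer hsub
      have hdist : 0 ≤ walkWeight F qG :=
        le_trans (hext c hcX b hbX) (distF_le_walkWeight F qG hqGpath)
      -- compute the weight
      have hped : p.edges = q.edges.reverse ++ [s(s, c)] := by
        have h1 : p.edges.reverse = s(s, c) :: q.edges := by
          rw [← SimpleGraph.Walk.edges_reverse, hq, SimpleGraph.Walk.edges_cons]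
        have h2 : p.edges = (s(s, c) :: q.edges).reverse := by
          rw [← h1, List.reverse_reverse]
        simpa using h2
      have hFiff : ∀ e ∈ q.edges, (e ∈ F ∪ {s(r, s)}) ↔ e ∈ F := by
        intro e he
        constructor
        · rintro (h' | h')
          · exact h'
          · exfalso
            have := hsub e he
            rw [Set.mem_singleton_iff] at h'
            rw [h', SimpleGraph.mem_edgeSet] at this
            exact hr (hGV _ _ this).1
        · exact Or.inl
      rw [walkWeight_eq_lw, SimpleGraph.Walk.edges_cons, hped, lw_cons, lw_append,
        lw_cons, lw_nil, if_neg (hsX_not b hbX), if_neg (hsX_not c hcX),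
        lw_perm _ (List.reverse_perm q.edges), lw_congr hFiff]
      have : lw F q.edges = walkWeight F qG := by
        rw [walkWeight_eq_lw, hqGedge]
      rw [this]
      linarith
  intro v Q hQ hneg x hx hedge
  have hsmem : s ∈ Q.support := Q.fst_mem_support_of_mem_edges hedge
  have hQ' := hQ.rotate hsmem
  have hw : walkWeight (F ∪ {s(r, s)}) (Q.rotate s hsmem) = walkWeight (F ∪ {s(r, s)}) Q := by
    rw [walkWeight_eq_lw, walkWeight_eq_lw]
    exact lw_perm _ (Q.rotate_edges s hsmem).perm
  have := hkey (Q.rotate s hsmem) hQ'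
  rw [hw] at this
  linarith
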